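/- Let a, b be real numbers and, for real t > 0, let f(t) = t^{2+iπ/2} + (1 + (π/4)i)·( t^{1+iπ/2} + (a + b(π/4)i)·t^{iπ/2} ). Then as t → ∞, |f(t)| = t² + t + a − (π²/16)b + π²/32 + O(1/t); precisely, there exist constants A > 0 and t₀ > 0 such that for all real t ≥ t₀, | |f(t)| − t² − t − a + (π²/16)b − π²/32 | ≤ A/t. -/

import Mathlib

open Real

/-- `f(t) = t^{2+iπ/2} + (1 + (π/4)i)·(t^{1+iπ/2} + (a + b(π/4)i)·t^{iπ/2})`. -/
noncomputable def f (a b t : ℝ) : ℂ :=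
  (t : ℂ) ^ (2 + Complex.I * (π : ℂ)/2)
    + (1 + (π : ℂ)/4 * Complex.I) *
        ((t : ℂ) ^ (1 + Complex.I * (π : ℂ)/2)
          + ((a : ℂ) + (b : ℂ) * (π : ℂ)/4 * Complex.I) * (t : ℂ) ^ (Complex.I * (π : ℂ)/2))

private lemma norm_f_eq (a b t : ℝ) (ht : 0 < t) :
    ‖f a b t‖ = Real.sqrt ((t^2+t+a-(π^2/16)*b)^2 + ((π/4)*(t+a+b))^2) := by
  have ht0 : (t : ℂ) ≠ 0 := by exact_mod_cast ht.ne'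
  have h1 : f a b t = (t : ℂ) ^ (Complex.I * (π : ℂ)/2) *
      (((t^2+t+a-(π^2/16)*b : ℝ) : ℂ) + ((π/4)*(t+a+b) : ℝ) * Complex.I) := by
    unfold f
    rw [show (2 + Complex.I * (π : ℂ)/2) = (2:ℂ) + Complex.I * (π : ℂ)/2 from rfl,
      Complex.cpow_add _ _ ht0, show (1 + Complex.I * (π : ℂ)/2) = (1:ℂ) + Complex.I * (π : ℂ)/2 from rfl,
      Complex.cpow_add _ _ ht0, Complex.cpow_one,
      show ((2:ℂ)) = ((2:ℕ):ℂ) by norm_num, Complex.cpow_natCast]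
    push_cast
    ring_nf
    simp [Complex.ext_iff]
    constructor <;> ring
  rw [h1, norm_mul,
    Complex.norm_cpow_eq_rpow_re_of_pos ht, Complex.norm_add_mul_I]
  simp

set_option maxHeartbeats 1000000 in

private theorem key (a b : ℝ) : ∃ A > (0:ℝ), ∃ t₀ > (0:ℝ), ∀ t : ℝ, t ≥ t₀ →
    |Real.sqrt ((t^2+t+a-(π^2/16)*b)^2 + ((π/4)*(t+a+b))^2)
      - t^2 - t - a + (π^2/16) * b - π^2/32| ≤ A / t := by
  set α := 2*a+2*b-1 with hα
  set β := (a+b)^2 - a + (π^2/16)*b - π^2/64 with hβ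
  set K := (π^2/16)*(|α| + |β|) with hK
  clear_value α β K
  have hπ : (0:ℝ) < π^2/16 := by positivity
  have hKnn : 0 ≤ K := by rw [hK]; positivity
  refine ⟨K+1, by positivity, max (K+1) (max 1 (|a| + (π^2/16)*|b| + 1)), by positivity, ?_⟩
  intro t ht
  have ht1 : (1:ℝ) ≤ t := le_trans (le_trans (le_max_left _ _) (le_max_right _ _)) ht
  have htA : K + 1 ≤ t := le_trans (le_max_left _ _) ht
  have htab : |a| + (π^2/16)*|b| + 1 ≤ t := le_trans (le_trans (le_max_right _ _) (le_max_right _ _)) ht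
  have ht0 : (0:ℝ) < t := by linarith
  have hXt : t^2 ≤ t^2+t+a-(π^2/16)*b := by
    have h1 : -|a| ≤ a := neg_abs_le a
    have h2 : (π^2/16)*b ≤ (π^2/16)*|b| :=
      mul_le_mul_of_nonneg_left (le_abs_self b) hπ.le
    linarith
  set X := t^2+t+a-(π^2/16)*b with hX
  set Y := (π/4)*(t+a+b) with hY
  set c := π^2/32 with hc
  clear_value X Y c
  have hcpos : 0 < c := by rw [hc]; positivity
  have hXpos : (1:ℝ) ≤ X := by nlinarith
  have hid : X^2 + Y^2 = (X+c)^2 + (π^2/16)*(α*t+β) := by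
    rw [hX, hY, hc, hα, hβ]; ring
  have habs : |α * t + β| ≤ (|α| + |β|) * t := by
    calc |α * t + β| ≤ |α * t| + |β| := abs_add_le _ _
    _ = |α| * t + |β| := by rw [abs_mul, abs_of_pos ht0]
    _ ≤ (|α| + |β|) * t := by nlinarith [abs_nonneg β, abs_nonneg α]
  have hpert_ub : (π^2/16)*(α*t+β) ≤ K*t := by
    rw [hK]
    calc (π^2/16)*(α*t+β) ≤ (π^2/16) * |α * t + β| :=
      mul_le_mul_of_nonneg_left (le_abs_self _) hπ.le
    _ ≤ (π^2/16)*((|α| + |β|)*t) := mul_le_mul_of_nonneg_left habs hπ.le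
    _ = (π^2/16)*(|α| + |β|)*t := by ring
  have hpert_lb : -(K*t) ≤ (π^2/16)*(α*t+β) := by
    have h1 : (π^2/16) * (-|α * t + β|) ≤ (π^2/16)*(α*t+β) :=
      mul_le_mul_of_nonneg_left (neg_abs_le _) hπ.le
    have h2 : (π^2/16) * |α * t + β| ≤ K*t := by
      have := mul_le_mul_of_nonneg_left habs hπ.le
      rw [hK]; linarith
    linarith
  set A := K + 1 with hA
  clear_value A
  have hApos : (0:ℝ) < A := by rw [hA]; linarith
  have hAt : 0 < A / t := by positivity
  have hAt1 : A / t ≤ 1 := by rw [div_le_one ht0, hA]; linarith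
  have hAtt : t^2*(A/t) = A*t := by field_simp
  have hKA : K ≤ A := by rw [hA]; linarith
  have h2 : 2*A*t ≤ 2*(X+c)*(A/t) := by
    have f1 : t^2*(A/t) ≤ X*(A/t) := mul_le_mul_of_nonneg_right hXt hAt.le
    have f2 : 0 ≤ c*(A/t) := mul_nonneg hcpos.le hAt.le
    rw [hAtt] at f1
    nlinarith
  have f3 : K*t ≤ A*t := mul_le_mul_of_nonneg_right hKA ht0.le
  have hA1 : (1:ℝ) ≤ A := by rw [hA]; linarith
  have f4 : A*1 ≤ A*t := mul_le_mul_of_nonneg_left ht1 hApos.le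
  have hub : Real.sqrt (X^2+Y^2) ≤ X + c + A/t := by
    have h1 : X^2+Y^2 ≤ (X+c+A/t)^2 := by
      rw [hid]
      linarith [sq_nonneg (A/t)]
    calc Real.sqrt (X^2+Y^2) ≤ Real.sqrt ((X+c+A/t)^2) := Real.sqrt_le_sqrt h1
    _ = X+c+A/t := Real.sqrt_sq (by linarith)
  have hlb : X + c - A/t ≤ Real.sqrt (X^2+Y^2) := by
    have hnn : 0 ≤ X + c - A/t := by linarith
    rw [show X+c-A/t = Real.sqrt ((X+c-A/t)^2) from (Real.sqrt_sq hnn).symm]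
    apply Real.sqrt_le_sqrt
    rw [hid]
    have h3 : (A/t)^2 ≤ 1 := by nlinarith
    linarith
  have hEq : Real.sqrt (X^2+Y^2) - t^2 - t - a + (π^2/16)*b - c
      = Real.sqrt (X^2+Y^2) - (X+c) := by rw [hX]; ring
  rw [abs_le]
  constructor
  · rw [show -(A/t) = (X+c-A/t) - (X+c) by ring]
    have := hEq ▸ sub_le_sub_right hlb (X+c)
    linarith [hlb, hEq.ge]
  · linarith [hub, hEq.le]

/-- `|f(t)| = t² + t + a − (π²/16)b + π²/32 + O(1/t)` as `t → ∞`. -/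
theorem abs_f_asymptotics (a b : ℝ) :
    ∃ A > (0 : ℝ), ∃ t₀ > (0 : ℝ), ∀ t : ℝ, t ≥ t₀ →
      |‖f a b t‖ - t^2 - t - a + (π^2/16) * b - π^2/32| ≤ A / t := by
  obtain ⟨A, hA, t₀, ht₀, h⟩ := key a b
  refine ⟨A, hA, t₀, ht₀, fun t ht => ?_⟩
  rw [norm_f_eq a b t (lt_of_lt_of_le ht₀ ht)]
  exact h t ht
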